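/- Sivaramakrishnan's identity in divisor-sum form: for positive integers m, r, s with m∣r and s∣r, ∑_{a=1, gcd(a,s)=1}^{r} gcd(a-1,m) = r · ∑_{d∣m} (φ(d)/d) · ∏_{p∣s, p∤d}(1 - 1/p). -/

import Mathlib

open Finset
open scoped ArithmeticFunction.Moebius

lemma count_residue (L N t : ℕ) (hL : 0 < L) (hLN : L ∣ N) (ht1 : 1 ≤ t) (htL : t ≤ L) :
    ((Finset.Icc 1 N).filter (fun a => a % L = t % L)).card = N / L := by
  rw [← Finset.card_range (N / L)]
  symm
  apply Finset.card_bij (fun i _ => i * L + t)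
  · intro i hi
    simp only [Finset.mem_range] at hi
    simp only [Finset.mem_filter, Finset.mem_Icc]
    refine ⟨⟨by omega, ?_⟩, by simp [Nat.add_mod]⟩
    have : (i + 1) * L ≤ (N / L) * L := Nat.mul_le_mul_right _ (by omega)
    rw [Nat.div_mul_cancel hLN] at this
    nlinarith
  · intro i _ j _ h
    have := Nat.eq_of_mul_eq_mul_right hL (by omega : i * L = j * L)
    omega
  · intro a ha
    simp only [Finset.mem_filter, Finset.mem_Icc] at ha
    obtain ⟨⟨h1, h2⟩, h3⟩ := ha
    -- a ≡ t [mod L], a ≥ 1, t ∈ [1, L] ⇒ t ≤ a and L ∣ a - t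
    have hta : t ≤ a := by
      rcases Nat.lt_or_ge a L with h | h
      · have : a % L = a := Nat.mod_eq_of_lt h
        rcases Nat.eq_or_lt_of_le htL with rfl | htL'
        · -- t = L, a % L = L % L = 0, a < L so a = 0, contra
          simp [Nat.mod_self] at h3
          omega
        · rw [Nat.mod_eq_of_lt htL'] at h3
          omega
      · omega
    have hdvd : L ∣ a - t := (Nat.modEq_iff_dvd' hta).mp h3.symm
    refine ⟨(a - t) / L, ?_, ?_⟩
    · simp only [Finset.mem_range]
      apply Nat.div_lt_div_of_lt_of_dvd hLN
      omega
    · rw [Nat.div_mul_cancel hdvd]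
      omega

lemma count_two (d e r : ℕ) (hd : 0 < d) (he : 0 < e) (hdr : d ∣ r) (her : e ∣ r) :
    ((Finset.Icc 1 r).filter (fun a => e ∣ a ∧ d ∣ a - 1)).card
      = if Nat.gcd d e = 1 then r / (d * e) else 0 := by
  split_ifs with hco
  · -- coprime case
    have hco' : Nat.Coprime d e := hco
    set L := d * e with hLdef
    have hL : 0 < L := Nat.mul_pos hd he
    have hLr : L ∣ r := Nat.Coprime.mul_dvd_of_dvd_of_dvd hco' hdr her
    obtain ⟨c, hc1, hc0⟩ := Nat.chineseRemainder hco' 1 0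
    set t : ℕ := if c % L = 0 then L else c % L with htdef
    have htc : t % L = c % L := by
      rcases Nat.eq_zero_or_pos (c % L) with h | h
      · simp [htdef, h]
      · have : c % L < L := Nat.mod_lt _ hL
        simp only [htdef, if_neg (Nat.pos_iff_ne_zero.mp h)]
        exact Nat.mod_eq_of_lt this
    have key : ∀ a ∈ Finset.Icc 1 r, ((e ∣ a ∧ d ∣ a - 1) ↔ a % L = t % L) := by
      intro a ha
      simp only [Finset.mem_Icc] at ha
      rw [htc]
      constructor
      · rintro ⟨hea, hda⟩
        have h1 : a ≡ c [MOD d] := by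
          have : a ≡ 1 [MOD d] := ((Nat.modEq_iff_dvd' ha.1).mpr hda).symm
          exact this.trans hc1.symm
        have h2 : a ≡ c [MOD e] := by
          have : a ≡ 0 [MOD e] := (Nat.modEq_zero_iff_dvd).mpr hea
          exact this.trans hc0.symm
        exact (Nat.modEq_and_modEq_iff_modEq_mul hco').mp ⟨h1, h2⟩
      · intro h
        have h' : a ≡ c [MOD L] := h
        obtain ⟨h1, h2⟩ := (Nat.modEq_and_modEq_iff_modEq_mul hco').mpr h'
        constructor
        · exact (Nat.modEq_zero_iff_dvd).mp (h2.trans hc0)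
        · exact (Nat.modEq_iff_dvd' ha.1).mp (h1.trans hc1).symm
    rw [Finset.filter_congr key]
    apply count_residue L r t hL hLr
    · rcases Nat.eq_zero_or_pos (c % L) with h | h
      · simp only [htdef, if_pos h]; exact hL
      · simp only [htdef, if_neg (Nat.pos_iff_ne_zero.mp h)]; omega
    · rcases Nat.eq_zero_or_pos (c % L) with h | h
      · simp [htdef, h]
      · have : c % L < L := Nat.mod_lt _ hL
        simp only [htdef, if_neg (Nat.pos_iff_ne_zero.mp h)]
        omega
  · -- non-coprime: set is empty
    rw [Finset.card_eq_zero, Finset.filter_eq_empty_iff]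
    rintro a ha ⟨hea, hda⟩
    simp only [Finset.mem_Icc] at ha
    apply hco
    have hg1 : Nat.gcd d e ∣ a := dvd_trans (Nat.gcd_dvd_right d e) hea
    have hg2 : Nat.gcd d e ∣ a - 1 := dvd_trans (Nat.gcd_dvd_left d e) hda
    have : Nat.gcd d e ∣ a - (a - 1) := Nat.dvd_sub hg1 hg2
    have haa : a - (a - 1) = 1 := by omega
    rwa [haa, Nat.dvd_one] at this

lemma squarefree_prod_primes {Q : Finset ℕ} (h : ∀ p ∈ Q, p.Prime) :
    Squarefree (∏ p ∈ Q, p) := by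
  classical
  induction Q using Finset.cons_induction with
  | empty => simp [squarefree_one]
  | cons p T hpT ih =>
    rw [Finset.prod_cons]
    have hp : p.Prime := h p (Finset.mem_cons_self p T)
    have hT : ∀ q ∈ T, q.Prime := fun q hq => h q (Finset.mem_cons_of_mem hq)
    rw [Nat.squarefree_mul_iff]
    refine ⟨?_, hp.squarefree, ih hT⟩
    apply Nat.Coprime.prod_right
    intro q hq
    exact (Nat.coprime_primes hp (hT q hq)).mpr (fun hpq => hpT (hpq ▸ hq))

open ArithmeticFunction in
lemma lemmaM (d s : ℕ) (hs : 0 < s) :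
    ∑ e ∈ s.divisors, (if Nat.gcd d e = 1 then (μ e : ℚ) / e else 0)
      = ∏ p ∈ s.primeFactors.filter (fun p => ¬ p ∣ d), (1 - 1/(p:ℚ)) := by
  classical
  set Q := s.primeFactors.filter (fun p => ¬ p ∣ d) with hQ
  have hQp : ∀ p ∈ Q, p.Prime := fun p hp =>
    Nat.prime_of_mem_primeFactors (Finset.mem_filter.mp hp).1
  set s₀ := ∏ p ∈ Q, p with hs₀
  have hsq : Squarefree s₀ := squarefree_prod_primes hQp
  have hs₀pos : 0 < s₀ := Finset.prod_pos (fun p hp => (hQp p hp).pos)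
  have hPF : s₀.primeFactors = Q := Nat.primeFactors_prod hQp
  -- the multiplicative arithmetic function n ↦ n⁻¹
  set f : ArithmeticFunction ℚ := ⟨fun n => if n = 0 then 0 else (n : ℚ)⁻¹, by simp⟩ with hf
  have hfval : ∀ n : ℕ, n ≠ 0 → f n = (n : ℚ)⁻¹ := by
    intro n hn; simp [hf, hn, ArithmeticFunction.coe_mk]
  have hfmult : f.IsMultiplicative := by
    constructor
    · simp [hf, ArithmeticFunction.coe_mk]
    · intro a b _
      rcases Nat.eq_zero_or_pos a with rfl | ha
      · simp [hf, ArithmeticFunction.coe_mk]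
      rcases Nat.eq_zero_or_pos b with rfl | hb
      · simp [hf, ArithmeticFunction.coe_mk]
      rw [hfval _ (by positivity), hfval _ ha.ne', hfval _ hb.ne']
      push_cast
      rw [mul_inv]
  have key := hfmult.prodPrimeFactors_one_sub_of_squarefree f hsq
  rw [hPF] at key
  have hdivs : s₀.divisors = s.divisors.filter (fun e => Squarefree e ∧ Nat.gcd d e = 1) := by
    ext x
    simp only [Nat.mem_divisors, Finset.mem_filter]
    constructor
    · rintro ⟨hxs₀, -⟩
      have hxs : x ∣ s := by
        calc x ∣ s₀ := hxs₀
        _ ∣ ∏ p ∈ s.primeFactors, p := Finset.prod_dvd_prod_of_subset _ _ _ (Finset.filter_subset _ _)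
        _ ∣ s := Nat.prod_primeFactors_dvd s
      refine ⟨⟨hxs, hs.ne'⟩, hsq.squarefree_of_dvd hxs₀, ?_⟩
      by_contra hgcd
      set q := (Nat.gcd d x).minFac with hq
      have hqp : q.Prime := Nat.minFac_prime hgcd
      have hqd : q ∣ d := (Nat.minFac_dvd _).trans (Nat.gcd_dvd_left _ _)
      have hqx : q ∣ x := (Nat.minFac_dvd _).trans (Nat.gcd_dvd_right _ _)
      have : q ∈ Q := hPF ▸ Nat.mem_primeFactors.mpr ⟨hqp, hqx.trans hxs₀, hs₀pos.ne'⟩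
      exact (Finset.mem_filter.mp this).2 hqd
    · rintro ⟨⟨hxs, -⟩, hsqx, hgcd⟩
      refine ⟨?_, hs₀pos.ne'⟩
      have hsub : x.primeFactors ⊆ Q := by
        intro p hp
        obtain ⟨hpp, hpx, -⟩ := Nat.mem_primeFactors.mp hp
        refine Finset.mem_filter.mpr ⟨Nat.mem_primeFactors.mpr ⟨hpp, hpx.trans hxs, hs.ne'⟩, ?_⟩
        intro hpd
        have : p ∣ Nat.gcd d x := Nat.dvd_gcd hpd hpx
        rw [hgcd, Nat.dvd_one] at this
        exact hpp.one_lt.ne' this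
      calc x = ∏ p ∈ x.primeFactors, p := (Nat.prod_primeFactors_of_squarefree hsqx).symm
      _ ∣ ∏ p ∈ Q, p := Finset.prod_dvd_prod_of_subset _ _ _ hsub
  calc ∑ e ∈ s.divisors, (if Nat.gcd d e = 1 then (μ e : ℚ) / e else 0)
      = ∑ e ∈ s.divisors, (if Squarefree e ∧ Nat.gcd d e = 1 then (μ e : ℚ) / e else 0) := by
        apply Finset.sum_congr rfl
        intro e _
        by_cases hse : Squarefree e
        · simp [hse]
        · simp [hse, ArithmeticFunction.moebius_eq_zero_of_not_squarefree hse]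
    _ = ∑ e ∈ s.divisors.filter (fun e => Squarefree e ∧ Nat.gcd d e = 1), (μ e : ℚ) / e :=
        (Finset.sum_filter _ _).symm
    _ = ∑ e ∈ s₀.divisors, (μ e : ℚ) * f e := by
        rw [hdivs]
        apply Finset.sum_congr rfl
        intro e he
        have he0 : e ≠ 0 := by
          rw [← hdivs] at he
          exact Nat.pos_of_mem_divisors he |>.ne'
        rw [hfval e he0, div_eq_mul_inv]
    _ = ∏ p ∈ Q, (1 - f p) := key.symm
    _ = ∏ p ∈ Q, (1 - 1/(p:ℚ)) := by
        apply Finset.prod_congr rfl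
        intro p hp
        rw [hfval p (hQp p hp).pos.ne', one_div]

lemma gcd_divisors_filter (n m : ℕ) (hm : 0 < m) :
    m.divisors.filter (· ∣ n) = (Nat.gcd n m).divisors := by
  ext x
  simp only [Nat.mem_divisors, Finset.mem_filter]
  constructor
  · rintro ⟨⟨hxm, -⟩, hxn⟩
    exact ⟨Nat.dvd_gcd hxn hxm, fun h => hm.ne' ((Nat.gcd_eq_zero_iff.mp h).2)⟩
  · rintro ⟨hx, -⟩
    exact ⟨⟨hx.trans (Nat.gcd_dvd_right _ _), hm.ne'⟩, hx.trans (Nat.gcd_dvd_left _ _)⟩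

lemma gcd_eq_sum_totient (n m : ℕ) (hm : 0 < m) :
    Nat.gcd n m = ∑ d ∈ m.divisors, (if d ∣ n then d.totient else 0) := by
  rw [← Finset.sum_filter, gcd_divisors_filter n m hm, Nat.sum_totient]

open ArithmeticFunction in
lemma sum_moebius_divisors (n : ℕ) :
    ∑ e ∈ n.divisors, μ e = if n = 1 then 1 else 0 := by
  rw [← ArithmeticFunction.coe_mul_zeta_apply, ArithmeticFunction.moebius_mul_coe_zeta,
    ArithmeticFunction.one_apply]

open ArithmeticFunction in
lemma stepB (s a : ℕ) (hs : 0 < s) :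
    ∑ e ∈ s.divisors, (if e ∣ a then (μ e : ℚ) else 0)
      = if Nat.gcd a s = 1 then 1 else 0 := by
  have h : ∑ e ∈ s.divisors, (if e ∣ a then (μ e : ℤ) else 0)
      = if Nat.gcd a s = 1 then 1 else 0 := by
    rw [← Finset.sum_filter, gcd_divisors_filter a s hs, sum_moebius_divisors]
  calc ∑ e ∈ s.divisors, (if e ∣ a then (μ e : ℚ) else 0)
      = ((∑ e ∈ s.divisors, (if e ∣ a then (μ e : ℤ) else 0) : ℤ) : ℚ) := by
        push_cast
        apply Finset.sum_congr rfl
        intro e _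
        split_ifs <;> simp
    _ = _ := by rw [h]; split_ifs <;> simp

open ArithmeticFunction

theorem sivaramakrishnan_divisor_form (m r s : ℕ) (hm : 0 < m) (hr : 0 < r) (hs : 0 < s)
    (hmr : m ∣ r) (hsr : s ∣ r) :
    (∑ a ∈ (Finset.Icc 1 r).filter (fun a => Nat.gcd a s = 1), (Nat.gcd (a - 1) m : ℚ))
      = r * ∑ d ∈ m.divisors,
          ((d.totient : ℚ) / d) *
            ∏ p ∈ s.primeFactors.filter (fun p => ¬ p ∣ d), (1 - 1 / (p : ℚ)) := by
  classical
  have hLHS : (∑ a ∈ (Finset.Icc 1 r).filter (fun a => Nat.gcd a s = 1), (Nat.gcd (a - 1) m : ℚ))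
      = ∑ d ∈ m.divisors, (d.totient : ℚ) *
          (((Finset.Icc 1 r).filter (fun a => Nat.gcd a s = 1 ∧ d ∣ a - 1)).card : ℚ) := by
    calc ∑ a ∈ (Finset.Icc 1 r).filter (fun a => Nat.gcd a s = 1), (Nat.gcd (a - 1) m : ℚ)
        = ∑ a ∈ (Finset.Icc 1 r).filter (fun a => Nat.gcd a s = 1),
            ∑ d ∈ m.divisors, (if d ∣ a - 1 then (d.totient : ℚ) else 0) := by
          refine Finset.sum_congr rfl fun a _ => ?_
          rw [gcd_eq_sum_totient (a-1) m hm]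
          push_cast
          refine Finset.sum_congr rfl fun d _ => ?_
          split_ifs <;> simp
      _ = ∑ d ∈ m.divisors, ∑ a ∈ (Finset.Icc 1 r).filter (fun a => Nat.gcd a s = 1),
            (if d ∣ a - 1 then (d.totient : ℚ) else 0) := Finset.sum_comm
      _ = _ := by
          refine Finset.sum_congr rfl fun d _ => ?_
          rw [← Finset.sum_filter, Finset.filter_filter, Finset.sum_const, nsmul_eq_mul, mul_comm]
  have hC : ∀ d, (((Finset.Icc 1 r).filter (fun a => Nat.gcd a s = 1 ∧ d ∣ a - 1)).card : ℚ)
        = ∑ e ∈ s.divisors, (μ e : ℚ) *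
            (((Finset.Icc 1 r).filter (fun a => e ∣ a ∧ d ∣ a - 1)).card : ℚ) := by
    intro d
    rw [← Finset.sum_boole]
    calc ∑ a ∈ Finset.Icc 1 r, (if Nat.gcd a s = 1 ∧ d ∣ a - 1 then (1:ℚ) else 0)
        = ∑ a ∈ Finset.Icc 1 r,
            (if Nat.gcd a s = 1 then (1:ℚ) else 0) * (if d ∣ a - 1 then (1:ℚ) else 0) := by
          refine Finset.sum_congr rfl fun a _ => ?_
          rw [ite_zero_mul_ite_zero, one_mul]
      _ = ∑ a ∈ Finset.Icc 1 r,
            (∑ e ∈ s.divisors, (if e ∣ a then (μ e : ℚ) else 0)) *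
              (if d ∣ a - 1 then (1:ℚ) else 0) := by
          refine Finset.sum_congr rfl fun a _ => ?_
          rw [stepB s a hs]
      _ = ∑ a ∈ Finset.Icc 1 r, ∑ e ∈ s.divisors,
            (if e ∣ a then (μ e : ℚ) else 0) * (if d ∣ a - 1 then (1:ℚ) else 0) := by
          refine Finset.sum_congr rfl fun a _ => ?_
          rw [Finset.sum_mul]
      _ = ∑ e ∈ s.divisors, ∑ a ∈ Finset.Icc 1 r,
            (if e ∣ a then (μ e : ℚ) else 0) * (if d ∣ a - 1 then (1:ℚ) else 0) :=
          Finset.sum_comm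
      _ = ∑ e ∈ s.divisors, (μ e : ℚ) *
            ∑ a ∈ Finset.Icc 1 r, (if e ∣ a ∧ d ∣ a - 1 then (1:ℚ) else 0) := by
          refine Finset.sum_congr rfl fun e _ => ?_
          rw [Finset.mul_sum]
          refine Finset.sum_congr rfl fun a _ => ?_
          rw [ite_zero_mul_ite_zero, mul_one, mul_ite, mul_one, mul_zero]
      _ = _ := by
          refine Finset.sum_congr rfl fun e _ => ?_
          rw [Finset.sum_boole]
  rw [hLHS, Finset.mul_sum]
  refine Finset.sum_congr rfl fun d hd => ?_
  obtain ⟨hdm, -⟩ := Nat.mem_divisors.mp hd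
  have hd0 : 0 < d := Nat.pos_of_mem_divisors hd
  rw [hC d, ← lemmaM d s hs, Finset.mul_sum, Finset.mul_sum, Finset.mul_sum]
  refine Finset.sum_congr rfl fun e he => ?_
  obtain ⟨hes, -⟩ := Nat.mem_divisors.mp he
  have he0 : 0 < e := Nat.pos_of_mem_divisors he
  rw [count_two d e r hd0 he0 (hdm.trans hmr) (hes.trans hsr)]
  split_ifs with hco
  · have hde : d * e ∣ r := Nat.Coprime.mul_dvd_of_dvd_of_dvd hco (hdm.trans hmr) (hes.trans hsr)
    rw [Nat.cast_div hde (by positivity)]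
    push_cast
    field_simp
  · simp
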